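/- Let V be a subspace, 0 ≤ Ω ≤ I, and s, ε ∈ (0,1). If min over density operators ρ with range(ρ) ⊆ V and σ with tr(σ Π_V) ≤ 1 − ε of tr(Ω(ρ − σ)) exceeds ε·s, then Δ₂ = Π_V Ω Π_V − (tr(Ω Π_V)/tr(Π_V))·Π_V satisfies ‖Δ₂‖_∞ < ε/(1−ε). -/

import Mathlib

open Matrix
open scoped ComplexOrder

namespace QSVQDH

variable {d : ℕ}

/-- Schatten 1-norm (trace norm). -/
noncomputable def trNorm (A : Matrix (Fin d) (Fin d) ℂ) : ℝ :=
  ((Matrix.posSemidef_conjTranspose_mul_self A).1.eigenvectorUnitary.1 *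
    Matrix.diagonal (fun i => ((Real.sqrt
      ((Matrix.posSemidef_conjTranspose_mul_self A).1.eigenvalues i) : ℝ) : ℂ)) *
    (star (Matrix.posSemidef_conjTranspose_mul_self A).1.eigenvectorUnitary :
      Matrix (Fin d) (Fin d) ℂ)).trace.re

/-- Schatten 2-norm (Hilbert–Schmidt norm). -/
noncomputable def hsNorm (A : Matrix (Fin d) (Fin d) ℂ) : ℝ :=
  Real.sqrt ((Aᴴ * A).trace.re)

/-- Operator norm. -/
noncomputable def opNorm (A : Matrix (Fin d) (Fin d) ℂ) : ℝ :=
  ‖Matrix.toEuclideanCLM (𝕜 := ℂ) A‖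

/-- Density operator: positive semidefinite with unit trace. -/
def IsDensity (ρ : Matrix (Fin d) (Fin d) ℂ) : Prop := ρ.PosSemidef ∧ ρ.trace = 1

/-- POVM element: 0 ≤ M ≤ I. -/
def IsPOVMElem (M : Matrix (Fin d) (Fin d) ℂ) : Prop := M.PosSemidef ∧ (1 - M).PosSemidef

/-- A measurement class of binary effects: contains 0, consists of POVM elements,
is convex, and is closed under M ↦ I − M. -/
def IsMClass (Mset : Set (Matrix (Fin d) (Fin d) ℂ)) : Prop :=
  0 ∈ Mset ∧ (∀ M ∈ Mset, IsPOVMElem M) ∧ Convex ℝ Mset ∧ (∀ M ∈ Mset, 1 - M ∈ Mset)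

/-- The M-seminorm ‖Δ‖_M = sup_{M ∈ Mset} (2 tr(MΔ) − tr Δ). -/
noncomputable def Mnorm (Mset : Set (Matrix (Fin d) (Fin d) ℂ))
    (Δ : Matrix (Fin d) (Fin d) ℂ) : ℝ :=
  sSup ((fun M => 2 * (M * Δ).trace.re - Δ.trace.re) '' Mset)

/-- The ε-distinguishability ratio μ_{ρ,M}(ε). -/
noncomputable def mu (Mset : Set (Matrix (Fin d) (Fin d) ℂ))
    (ρ : Matrix (Fin d) (Fin d) ℂ) (ε : ℝ) : ℝ :=
  (1 / (2 * ε)) *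
    sInf ((fun σ => Mnorm Mset (ρ - σ)) '' {σ | IsDensity σ ∧ 2 * ε ≤ trNorm (ρ - σ)})

/-- The ε-visibility γ_{V,M}(ε), where the subspace V is given by its
orthogonal projector P. -/
noncomputable def gamma (Mset : Set (Matrix (Fin d) (Fin d) ℂ))
    (P : Matrix (Fin d) (Fin d) ℂ) (ε : ℝ) : ℝ :=
  (1 / ε) * sSup ((fun Ω =>
      sInf ((fun p : Matrix (Fin d) (Fin d) ℂ × Matrix (Fin d) (Fin d) ℂ =>
          (Ω * (p.1 - p.2)).trace.re) ''
        {p | IsDensity p.1 ∧ P * p.1 = p.1 ∧ IsDensity p.2 ∧ (p.2 * P).trace.re ≤ 1 - ε}))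
    '' Mset)

/-- The ε-visibility in its minimax (minimum) form. -/
noncomputable def gammaMin (Mset : Set (Matrix (Fin d) (Fin d) ℂ))
    (P : Matrix (Fin d) (Fin d) ℂ) (ε : ℝ) : ℝ :=
  sInf ((fun p : Matrix (Fin d) (Fin d) ℂ × Matrix (Fin d) (Fin d) ℂ =>
      (1 / (2 * ε)) * Mnorm Mset (p.1 - p.2)) ''
    {p | IsDensity p.1 ∧ P * p.1 = p.1 ∧ IsDensity p.2 ∧ (p.2 * P).trace.re ≤ 1 - ε})

/-- μ_{ρ,M}(1), defined through perfectly distinguishable (orthogonal) counterparts. -/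
noncomputable def muone (Mset : Set (Matrix (Fin d) (Fin d) ℂ))
    (ρ : Matrix (Fin d) (Fin d) ℂ) : ℝ :=
  (1 / 2) * sInf ((fun σ => Mnorm Mset (ρ - σ)) '' {σ | IsDensity σ ∧ (ρ * σ).trace = 0})

/-- The distinguishability ratio μ̂_{ρ,M}. -/
noncomputable def muhat (Mset : Set (Matrix (Fin d) (Fin d) ℂ))
    (ρ : Matrix (Fin d) (Fin d) ℂ) : ℝ :=
  sInf ((fun σ => Mnorm Mset (ρ - σ) / trNorm (ρ - σ)) '' {σ | IsDensity σ ∧ σ ≠ ρ})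

section Aux

open scoped InnerProductSpace

private lemma creal : (RCLike.ofReal : ℝ → ℂ) = Complex.ofReal := rfl

lemma opNorm_le_of_quadratic (A : Matrix (Fin d) (Fin d) ℂ) (hA : A.IsHermitian) (c : ℝ)
    (hc : 0 ≤ c)
    (h : ∀ x : Fin d → ℂ, |(star x ⬝ᵥ (A *ᵥ x)).re| ≤ c * (star x ⬝ᵥ x).re) :
    ‖Matrix.toEuclideanCLM (𝕜 := ℂ) A‖ ≤ c := by
  set T := Matrix.toEuclideanCLM (𝕜 := ℂ) A with hT
  have hsa : IsSelfAdjoint T := by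
    rw [hT]
    exact (show IsSelfAdjoint A from hA).map (Matrix.toEuclideanCLM (𝕜 := ℂ))
  have hsym : ∀ u v : EuclideanSpace ℂ (Fin d), ⟪T u, v⟫_ℂ = ⟪u, T v⟫_ℂ := by
    intro u v
    rw [← ContinuousLinearMap.adjoint_inner_left, hsa.adjoint_eq]
  have happ : ∀ x : EuclideanSpace ℂ (Fin d), (T x : Fin d → ℂ) = A *ᵥ (x : Fin d → ℂ) :=
    fun x => rfl
  have hq : ∀ x : EuclideanSpace ℂ (Fin d), |(⟪x, T x⟫_ℂ).re| ≤ c * ‖x‖ ^ 2 := by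
    intro x
    have h1 : ⟪x, T x⟫_ℂ = star (x : Fin d → ℂ) ⬝ᵥ (A *ᵥ (x : Fin d → ℂ)) := by
      rw [PiLp.inner_apply]
      simp [dotProduct, happ x, RCLike.inner_apply]
      exact Finset.sum_congr rfl fun i _ => mul_comm _ _
    have h2 : (star (x : Fin d → ℂ) ⬝ᵥ (x : Fin d → ℂ)).re = ‖x‖ ^ 2 := by
      have := inner_self_eq_norm_sq (𝕜 := ℂ) x
      rw [← this, PiLp.inner_apply]
      simp [dotProduct, RCLike.inner_apply]
      refine Finset.sum_congr rfl fun i _ => ?_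
      rw [← Complex.ofReal_pow, Complex.ofReal_re, Complex.sq_norm, Complex.normSq_apply]
    rw [h1, ← h2]
    exact h x
  refine T.opNorm_le_bound hc (fun x => ?_)
  by_cases hTx : T x = 0
  · rw [hTx, norm_zero]
    exact mul_nonneg hc (norm_nonneg _)
  by_cases hx : x = 0
  · simp [hx]
  have hTxn : 0 < ‖T x‖ := norm_pos_iff.mpr hTx
  have hxn : 0 < ‖x‖ := norm_pos_iff.mpr hx
  set y : EuclideanSpace ℂ (Fin d) := ((‖x‖ / ‖T x‖ : ℝ) : ℂ) • T x with hy
  have hny : ‖y‖ = ‖x‖ := by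
    rw [hy, norm_smul]
    simp only [Complex.norm_real, Real.norm_eq_abs, abs_div, abs_of_nonneg (norm_nonneg x),
      abs_of_nonneg (norm_nonneg (T x))]
    field_simp
  have expand : ∀ u v : EuclideanSpace ℂ (Fin d),
      ⟪u + v, T (u + v)⟫_ℂ = ⟪u, T u⟫_ℂ + ⟪u, T v⟫_ℂ + ⟪v, T u⟫_ℂ + ⟪v, T v⟫_ℂ := by
    intro u v
    rw [map_add, inner_add_left, inner_add_right, inner_add_right]
    ring
  have expand' : ∀ u v : EuclideanSpace ℂ (Fin d),
      ⟪u - v, T (u - v)⟫_ℂ = ⟪u, T u⟫_ℂ - ⟪u, T v⟫_ℂ - ⟪v, T u⟫_ℂ + ⟪v, T v⟫_ℂ := by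
    intro u v
    rw [map_sub, inner_sub_left, inner_sub_right, inner_sub_right]
    ring
  have key : (⟪x + y, T (x + y)⟫_ℂ).re - (⟪x - y, T (x - y)⟫_ℂ).re = 4 * (⟪y, T x⟫_ℂ).re := by
    rw [expand, expand']
    have hconj : ⟪x, T y⟫_ℂ = starRingEnd ℂ ⟪y, T x⟫_ℂ := by
      rw [← hsym x y, ← inner_conj_symm]
    rw [hconj]
    simp [Complex.add_re, Complex.sub_re, Complex.conj_re]
    rw [hsym x y, hconj, Complex.conj_re]
    ring
  have hyTx : (⟪y, T x⟫_ℂ).re = ‖x‖ * ‖T x‖ := by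
    rw [hy, inner_smul_left, inner_self_eq_norm_sq_to_K (𝕜 := ℂ)]
    simp only [creal, Complex.conj_ofReal, ← Complex.ofReal_pow, ← Complex.ofReal_mul,
      Complex.ofReal_re]
    field_simp
  have par : ‖x + y‖ ^ 2 + ‖x - y‖ ^ 2 = 2 * (‖x‖ ^ 2 + ‖y‖ ^ 2) := by
    have := parallelogram_law_with_norm ℂ x y
    linarith [this]
  have bound : 4 * (‖x‖ * ‖T x‖) ≤ 4 * (c * ‖x‖ ^ 2) := by
    have b1 := (abs_le.mp (hq (x + y))).2
    have b2 := (abs_le.mp (hq (x - y))).1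
    have hkey : 4 * (‖x‖ * ‖T x‖) =
        (⟪x + y, T (x + y)⟫_ℂ).re - (⟪x - y, T (x - y)⟫_ℂ).re := by rw [key, hyTx]
    have hparc : c * ‖x + y‖ ^ 2 + c * ‖x - y‖ ^ 2 = 4 * (c * ‖x‖ ^ 2) := by
      have : ‖x + y‖ ^ 2 + ‖x - y‖ ^ 2 = 4 * ‖x‖ ^ 2 := by rw [par, hny]; ring
      calc c * ‖x + y‖ ^ 2 + c * ‖x - y‖ ^ 2 = c * (‖x + y‖ ^ 2 + ‖x - y‖ ^ 2) := by ring
        _ = 4 * (c * ‖x‖ ^ 2) := by rw [this]; ring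
    linarith
  have hfin : ‖x‖ * ‖T x‖ ≤ c * ‖x‖ ^ 2 := by linarith
  nlinarith [hfin, hxn, hTxn]

lemma dot_star_self_eq (y : Fin d → ℂ) :
    star y ⬝ᵥ y = ((∑ i, Complex.normSq (y i) : ℝ) : ℂ) := by
  simp only [dotProduct, Pi.star_apply, Complex.ofReal_sum]
  refine Finset.sum_congr rfl (fun i _ => ?_)
  rw [Complex.star_def, mul_comm, Complex.mul_conj]

lemma dot_star_self_re_pos {y : Fin d → ℂ} (hy : y ≠ 0) :
    0 < (star y ⬝ᵥ y).re := by
  rw [dot_star_self_eq, Complex.ofReal_re]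
  obtain ⟨i, hi⟩ : ∃ i, y i ≠ 0 := by
    by_contra hc
    push_neg at hc
    exact hy (funext hc)
  exact Finset.sum_pos' (fun j _ => Complex.normSq_nonneg _)
    ⟨i, Finset.mem_univ i, Complex.normSq_pos.mpr hi⟩

lemma trace_vecMulVec (y w : Fin d → ℂ) : (vecMulVec y w).trace = y ⬝ᵥ w := by
  simp [Matrix.trace, Matrix.diag, vecMulVec_apply, dotProduct]

lemma trace_mul_vecMulVec (A : Matrix (Fin d) (Fin d) ℂ) (y : Fin d → ℂ) :
    (A * vecMulVec y (star y)).trace = star y ⬝ᵥ (A *ᵥ y) := by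
  simp only [Matrix.trace, Matrix.diag, Matrix.mul_apply, vecMulVec_apply, dotProduct,
    Matrix.mulVec, Pi.star_apply, Finset.mul_sum]
  exact Finset.sum_congr rfl fun i _ => Finset.sum_congr rfl fun k _ => by ring

lemma mul_vecMulVec (P : Matrix (Fin d) (Fin d) ℂ) (y w : Fin d → ℂ) :
    P * vecMulVec y w = vecMulVec (P *ᵥ y) w := by
  ext i j
  simp only [Matrix.mul_apply, vecMulVec_apply, Matrix.mulVec, dotProduct, Finset.sum_mul]
  exact Finset.sum_congr rfl (fun k _ => by ring)

lemma posSemidef_vecMulVec (y : Fin d → ℂ) : (vecMulVec y (star y)).PosSemidef := by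
  refine Matrix.PosSemidef.of_dotProduct_mulVec_nonneg ?_ ?_
  · ext i j
    simp [vecMulVec_apply, Matrix.conjTranspose_apply, mul_comm]
  · intro x
    have h1 : vecMulVec y (star y) *ᵥ x = (star y ⬝ᵥ x) • y := by
      ext i
      simp only [Matrix.mulVec, vecMulVec_apply, dotProduct, Pi.smul_apply, smul_eq_mul,
        Finset.sum_mul, Pi.star_apply]
      exact Finset.sum_congr rfl fun k _ => by ring
    rw [h1]
    set z := star y ⬝ᵥ x with hzdef
    have hz : star z = star x ⬝ᵥ y := by
      rw [hzdef, ← star_dotProduct]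
    have h2 : star x ⬝ᵥ (z • y) = star z * z := by
      rw [dotProduct_smul, smul_eq_mul, ← hz]
      exact mul_comm _ _
    rw [h2]
    exact star_mul_self_nonneg _
  
lemma psd_smul_real {M : Matrix (Fin d) (Fin d) ℂ} (hM : M.PosSemidef) {r : ℝ} (hr : 0 ≤ r) :
    ((r : ℂ) • M).PosSemidef := by
  refine Matrix.PosSemidef.of_dotProduct_mulVec_nonneg ?_ ?_
  · show ((r : ℂ) • M)ᴴ = (r : ℂ) • M
    rw [Matrix.conjTranspose_smul, hM.1.eq, Complex.star_def, Complex.conj_ofReal]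
  · intro x
    rw [Matrix.smul_mulVec, dotProduct_smul]
    exact smul_nonneg (by exact_mod_cast Complex.zero_le_real.mpr hr) (hM.dotProduct_mulVec_nonneg x)

lemma psd_trace_nonneg {M : Matrix (Fin d) (Fin d) ℂ} (hM : M.PosSemidef) :
    M.trace = ((M.trace.re : ℝ) : ℂ) ∧ 0 ≤ M.trace.re := by
  have hdiag : ∀ i, 0 ≤ M i i := by
    intro i
    have := hM.dotProduct_mulVec_nonneg (Pi.single i 1)
    simpa [Matrix.mulVec_single, dotProduct, Pi.single_apply] using this
  have htr : 0 ≤ M.trace := Finset.sum_nonneg (fun i _ => hdiag i)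
  have him : M.trace.im = 0 := by
    have := (Complex.le_def.mp htr).2
    simpa using this.symm
  exact ⟨Complex.ext (by simp) (by simp [him]), (Complex.le_def.mp htr).1⟩

lemma cnonneg_real {z : ℂ} (hz : 0 ≤ z) : z = ((z.re : ℝ) : ℂ) := by
  have him := (Complex.le_def.mp hz).2
  exact Complex.ext rfl (by simpa using him.symm)

lemma dot_star_self_real (y : Fin d → ℂ) :
    star y ⬝ᵥ y = (((star y ⬝ᵥ y).re : ℝ) : ℂ) := by
  rw [dot_star_self_eq]; simp

lemma dot_star_self_re_nonneg (y : Fin d → ℂ) : 0 ≤ (star y ⬝ᵥ y).re := by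
  rw [dot_star_self_eq]
  simp only [Complex.ofReal_re]
  exact Finset.sum_nonneg fun i _ => Complex.normSq_nonneg _

lemma psd_add {M N : Matrix (Fin d) (Fin d) ℂ} (hM : M.PosSemidef) (hN : N.PosSemidef) :
    (M + N).PosSemidef := by
  refine Matrix.PosSemidef.of_dotProduct_mulVec_nonneg (hM.1.add hN.1) fun x => ?_
  rw [Matrix.add_mulVec, dotProduct_add]
  exact add_nonneg (hM.dotProduct_mulVec_nonneg x) (hN.dotProduct_mulVec_nonneg x)

/-- The normalized pure state built from a vector. -/
noncomputable def vstate (y : Fin d → ℂ) : Matrix (Fin d) (Fin d) ℂ :=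
  ((((star y ⬝ᵥ y).re)⁻¹ : ℝ) : ℂ) • vecMulVec y (star y)

lemma vstate_psd (y : Fin d → ℂ) : (vstate y).PosSemidef :=
  psd_smul_real (posSemidef_vecMulVec y) (inv_nonneg.mpr (dot_star_self_re_nonneg y))

lemma smul_inv_aux {D : ℂ} {m : ℝ} (hD : D = (m : ℂ)) (hm : m ≠ 0) :
    ((m⁻¹ : ℝ) : ℂ) • D = 1 := by
  rw [hD, smul_eq_mul, ← Complex.ofReal_mul, inv_mul_cancel₀ hm]
  simp

lemma vstate_trace {y : Fin d → ℂ} (hy : y ≠ 0) : (vstate y).trace = 1 := by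
  rw [vstate, Matrix.trace_smul, trace_vecMulVec]
  exact smul_inv_aux (by rw [dotProduct_comm]; exact dot_star_self_real y)
    (ne_of_gt (dot_star_self_re_pos hy))

lemma density_mix {ρ1 ρ2 : Matrix (Fin d) (Fin d) ℂ} (h1 : IsDensity ρ1) (h2 : IsDensity ρ2)
    {a b : ℝ} (ha : 0 ≤ a) (hb : 0 ≤ b) (hab : a + b = 1) :
    IsDensity (((a : ℝ) : ℂ) • ρ1 + ((b : ℝ) : ℂ) • ρ2) := by
  refine ⟨psd_add (psd_smul_real h1.1 ha) (psd_smul_real h2.1 hb), ?_⟩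
  rw [Matrix.trace_add, Matrix.trace_smul, Matrix.trace_smul, h1.2, h2.2, smul_eq_mul,
    smul_eq_mul, mul_one, mul_one, ← Complex.ofReal_add, hab]
  simp

lemma trace_mix_mul (ρ1 ρ2 P : Matrix (Fin d) (Fin d) ℂ) (a b : ℂ) :
    ((a • ρ1 + b • ρ2) * P).trace = a * (ρ1 * P).trace + b * (ρ2 * P).trace := by
  rw [Matrix.add_mul, Matrix.smul_mul, Matrix.smul_mul, Matrix.trace_add, Matrix.trace_smul,
    Matrix.trace_smul, smul_eq_mul, smul_eq_mul]

lemma trace_mix (Ω ρ ρ1 ρ2 : Matrix (Fin d) (Fin d) ℂ) (a b : ℂ) :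
    (Ω * (ρ - (a • ρ1 + b • ρ2))).trace
      = (Ω * ρ).trace - a * (Ω * ρ1).trace - b * (Ω * ρ2).trace := by
  rw [mul_sub, Matrix.trace_sub, mul_add, Matrix.trace_add, mul_smul_comm, mul_smul_comm,
    Matrix.trace_smul, Matrix.trace_smul, smul_eq_mul, smul_eq_mul]
  ring

lemma trace_mul_vstate (A : Matrix (Fin d) (Fin d) ℂ) (y : Fin d → ℂ) :
    (A * vstate y).trace
      = ((((star y ⬝ᵥ y).re)⁻¹ : ℝ) : ℂ) * (star y ⬝ᵥ (A *ᵥ y)) := by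
  rw [vstate, mul_smul_comm, Matrix.trace_smul, trace_mul_vecMulVec, smul_eq_mul]

lemma mul_vstate {P : Matrix (Fin d) (Fin d) ℂ} {y : Fin d → ℂ} (h : P *ᵥ y = y) :
    P * vstate y = vstate y := by
  rw [vstate, mul_smul_comm, mul_vecMulVec, h]

lemma mul_vstate_zero {P : Matrix (Fin d) (Fin d) ℂ} {y : Fin d → ℂ} (h : P *ᵥ y = 0) :
    P * vstate y = 0 := by
  rw [vstate, mul_smul_comm, mul_vecMulVec, h]
  have : vecMulVec (0 : Fin d → ℂ) (star y) = 0 := by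
    ext i j; simp [vecMulVec_apply]
  rw [this, smul_zero]

end Aux

set_option maxHeartbeats 1000000 in
/-- third part of Lemma 1: the diagonal deviation
Δ₂ = Π_V Ω Π_V − (tr(ΩΠ_V)/tr Π_V)·Π_V satisfies ‖Δ₂‖_∞ < ε/(1−ε). -/
theorem deviation_lemma_diag (P Ω : Matrix (Fin d) (Fin d) ℂ)
    (hP : P.IsHermitian) (hP2 : P * P = P) (hP0 : P ≠ 0) (hP1 : P ≠ 1)
    (hΩ : IsPOVMElem Ω) (s ε : ℝ) (hs : s ∈ Set.Ioo (0 : ℝ) 1) (hε : ε ∈ Set.Ioo (0 : ℝ) 1)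
    (hmin : ∀ ρ σ : Matrix (Fin d) (Fin d) ℂ, IsDensity ρ → P * ρ = ρ →
      IsDensity σ → (σ * P).trace.re ≤ 1 - ε → ε * s < (Ω * (ρ - σ)).trace.re) :
    opNorm (P * Ω * P - ((Ω * P).trace.re / P.trace.re) • P) < ε / (1 - ε) := by
  obtain ⟨hε0, hε1⟩ := hε
  obtain ⟨hs0, hs1⟩ := hs
  obtain ⟨hΩp, hΩm⟩ := hΩ
  have hPe : Pᴴ = P := hP
  -- P is PSD
  have hPpsd : P.PosSemidef := by
    have h := Matrix.posSemidef_conjTranspose_mul_self P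
    rwa [hPe, hP2] at h
  -- 1 - P is PSD
  have hPm : (1 - P).PosSemidef := by
    have h := Matrix.posSemidef_conjTranspose_mul_self (1 - P)
    have e : (1 - P)ᴴ * (1 - P) = 1 - P := by
      rw [Matrix.conjTranspose_sub, Matrix.conjTranspose_one, hPe, sub_mul, one_mul,
        mul_sub, mul_one, hP2]
      simp
    rwa [e] at h
  -- trace of P is positive real
  have htrP := psd_trace_nonneg hPpsd
  set n : ℝ := P.trace.re with hn_def
  have hn : 0 < n := by
    rcases lt_or_eq_of_le htrP.2 with h | h
    · exact h
    · exfalso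
      apply hP0
      -- P.trace = 0 → P = 0 via Frobenius
      have htr0 : P.trace = 0 := by rw [htrP.1]; exact_mod_cast h.symm
      have hPPt : (Pᴴ * P).trace = 0 := by rw [hPe, hP2, htr0]
      have : ∑ i, ∑ j, Complex.normSq (P j i) = 0 := by
        have he : (Pᴴ * P).trace = ((∑ i, ∑ j, Complex.normSq (P j i) : ℝ) : ℂ) := by
          simp only [Matrix.trace, Matrix.diag, Matrix.mul_apply, Matrix.conjTranspose_apply,
            Complex.ofReal_sum]
          refine Finset.sum_congr rfl fun i _ => Finset.sum_congr rfl fun j _ => ?_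
          rw [Complex.star_def, mul_comm, Complex.mul_conj]
        rw [hPPt] at he
        exact_mod_cast he.symm
      ext i j
      have h1 : ∀ i' ∈ Finset.univ, ∀ j' ∈ (Finset.univ : Finset (Fin d)),
          Complex.normSq (P j' i') = 0 := by
        intro i' _ j' _
        have := (Finset.sum_eq_zero_iff_of_nonneg (fun k _ =>
          Finset.sum_nonneg fun l _ => Complex.normSq_nonneg (P l k))).mp this i' (Finset.mem_univ _)
        exact (Finset.sum_eq_zero_iff_of_nonneg (fun l _ => Complex.normSq_nonneg _)).mp this j'
          (Finset.mem_univ _)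
      have := h1 j (Finset.mem_univ _) i (Finset.mem_univ _)
      simpa [Complex.normSq_eq_zero] using this
  have htrPc : P.trace = ((n : ℝ) : ℂ) := htrP.1
  -- P Ω P is PSD, and P - P Ω P is PSD
  have hPOP : (P * Ω * P).PosSemidef := by
    have h := hΩp.conjTranspose_mul_mul_same P
    rwa [hPe] at h
  have hPOP' : (P - P * Ω * P).PosSemidef := by
    have h := hΩm.conjTranspose_mul_mul_same P
    rwa [hPe, mul_sub, mul_one, sub_mul, hP2] at h
  -- trace identities
  have hωtr : (Ω * P).trace = (P * Ω * P).trace := by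
    rw [Matrix.trace_mul_comm (P * Ω) P, ← Matrix.mul_assoc, hP2, Matrix.trace_mul_comm]
  set ω : ℝ := (Ω * P).trace.re with hω_def
  have hωc : (Ω * P).trace = ((ω : ℝ) : ℂ) := by
    rw [hωtr, (psd_trace_nonneg hPOP).1]
    congr 1
    rw [hω_def, hωtr]
  have hω0 : 0 ≤ ω := by
    have := (psd_trace_nonneg hPOP).2
    rw [hω_def, hωtr]; exact this
  have hωn : ω ≤ n := by
    have h2 := (psd_trace_nonneg hPOP').2
    rw [Matrix.trace_sub, Complex.sub_re] at h2
    have : (P * Ω * P).trace.re = ω := by rw [hω_def, hωtr]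
    rw [this] at h2
    linarith
  set t : ℝ := ω / n with ht_def
  have ht1 : t ≤ 1 := by rw [ht_def]; exact div_le_one_of_le₀ hωn (le_of_lt hn)
  have ht0 : 0 ≤ t := div_nonneg hω0 (le_of_lt hn)
  -- construct a unit vector orthogonal to V
  have h1P : (1 : Matrix (Fin d) (Fin d) ℂ) - P ≠ 0 := by
    intro hc
    exact hP1 (sub_eq_zero.mp hc).symm
  obtain ⟨i0, j0, hij⟩ : ∃ i j, ((1 : Matrix (Fin d) (Fin d) ℂ) - P) i j ≠ 0 := by
    by_contra hc
    push_neg at hc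
    exact h1P (by ext i j; exact hc i j)
  set w0 : Fin d → ℂ := ((1 : Matrix (Fin d) (Fin d) ℂ) - P) *ᵥ Pi.single j0 1 with hw0_def
  have hw0 : w0 ≠ 0 := by
    intro hc
    apply hij
    rw [hw0_def] at hc
    have := congr_fun hc i0
    simpa [Matrix.mulVec_single] using this
  have hPw0 : P *ᵥ w0 = 0 := by
    rw [hw0_def, Matrix.mulVec_mulVec, mul_sub, mul_one, hP2, sub_self, Matrix.zero_mulVec]
  set mw : ℝ := (star w0 ⬝ᵥ w0).re with hmw_def
  have hmw : 0 < mw := dot_star_self_re_pos hw0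
  set τ := vstate w0 with hτ_def
  have hτd : IsDensity τ := ⟨vstate_psd w0, vstate_trace hw0⟩
  have hτP : (τ * P).trace = 0 := by
    rw [Matrix.trace_mul_comm, mul_vstate_zero hPw0, Matrix.trace_zero]
  set qw : ℝ := (star w0 ⬝ᵥ (Ω *ᵥ w0)).re / mw with hqw_def
  have hqw0 : 0 ≤ qw :=
    div_nonneg (hΩp.re_dotProduct_nonneg w0) (le_of_lt hmw)
  have hΩτ : (Ω * τ).trace = ((qw : ℝ) : ℂ) := by
    rw [hτ_def, trace_mul_vstate, cnonneg_real (hΩp.dotProduct_mulVec_nonneg w0), hqw_def, hmw_def]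
    push_cast
    ring
  -- the maximally mixed state on V
  set ρP := ((n⁻¹ : ℝ) : ℂ) • P with hρP_def
  have hρPd : IsDensity ρP := by
    refine ⟨psd_smul_real hPpsd (inv_nonneg.mpr hn.le), ?_⟩
    rw [hρP_def, Matrix.trace_smul, htrPc, smul_eq_mul, ← Complex.ofReal_mul,
      inv_mul_cancel₀ (ne_of_gt hn)]
    simp
  have hPρP : P * ρP = ρP := by rw [hρP_def, mul_smul_comm, hP2]
  have hρPP : (ρP * P).trace = 1 := by rw [Matrix.trace_mul_comm, hPρP, hρPd.2]
  have hΩρP : (Ω * ρP).trace = ((t : ℝ) : ℂ) := by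
    rw [hρP_def, mul_smul_comm, Matrix.trace_smul, hωc, smul_eq_mul, ← Complex.ofReal_mul,
      ht_def]
    congr 1
    field_simp
  -- the key scalar estimate for unit vectors in V
  have key : ∀ y : Fin d → ℂ, P *ᵥ y = y → y ≠ 0 →
      |(star y ⬝ᵥ (Ω *ᵥ y)).re / (star y ⬝ᵥ y).re - t| ≤ ε * (1 - s) := by
    intro y hPy hy
    set my : ℝ := (star y ⬝ᵥ y).re with hmy_def
    have hmy : 0 < my := dot_star_self_re_pos hy
    set qy : ℝ := (star y ⬝ᵥ (Ω *ᵥ y)).re with hqy_def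
    set ry : ℝ := qy / my with hry_def
    have hry1 : ry ≤ 1 := by
      have h0 := hΩm.re_dotProduct_nonneg y
      rw [RCLike.re_eq_complex_re] at h0
      rw [Matrix.sub_mulVec, Matrix.one_mulVec, dotProduct_sub, Complex.sub_re] at h0
      rw [hry_def]
      exact div_le_one_of_le₀ (by rw [hqy_def, hmy_def]; linarith) hmy.le
    set ρy := vstate y with hρy_def
    have hρyd : IsDensity ρy := ⟨vstate_psd y, vstate_trace hy⟩
    have hPρy : P * ρy = ρy := mul_vstate hPy
    have hρyP : (ρy * P).trace = 1 := by rw [Matrix.trace_mul_comm, hPρy, hρyd.2]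
    have hΩρy : (Ω * ρy).trace = ((ry : ℝ) : ℂ) := by
      rw [hρy_def, trace_mul_vstate, cnonneg_real (hΩp.dotProduct_mulVec_nonneg y), hry_def, hqy_def, hmy_def]
      push_cast
      ring
    -- first application of hmin
    have hσ1d : IsDensity ((((1 - ε : ℝ)) : ℂ) • ρy + ((ε : ℝ) : ℂ) • τ) :=
      density_mix hρyd hτd (by linarith) hε0.le (by ring)
    have hσ1P : (((((1 - ε : ℝ)) : ℂ) • ρy + ((ε : ℝ) : ℂ) • τ) * P).trace.re ≤ 1 - ε := by
      rw [trace_mix_mul, hρyP, hτP, mul_one, mul_zero, add_zero, Complex.ofReal_re]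
    have h1 := hmin ρP _ hρPd hPρP hσ1d hσ1P
    rw [trace_mix, hΩρP, hΩρy, hΩτ] at h1
    have e1 : ((t : ℝ) : ℂ) - ((1 - ε : ℝ) : ℂ) * ((ry : ℝ) : ℂ) - ((ε : ℝ) : ℂ) * ((qw : ℝ) : ℂ)
        = ((t - (1 - ε) * ry - ε * qw : ℝ) : ℂ) := by push_cast; ring
    rw [e1, Complex.ofReal_re] at h1
    -- second application of hmin
    have hσ2d : IsDensity ((((1 - ε : ℝ)) : ℂ) • ρP + ((ε : ℝ) : ℂ) • τ) :=
      density_mix hρPd hτd (by linarith) hε0.le (by ring)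
    have hσ2P : (((((1 - ε : ℝ)) : ℂ) • ρP + ((ε : ℝ) : ℂ) • τ) * P).trace.re ≤ 1 - ε := by
      rw [trace_mix_mul, hρPP, hτP, mul_one, mul_zero, add_zero, Complex.ofReal_re]
    have h2 := hmin ρy _ hρyd hPρy hσ2d hσ2P
    rw [trace_mix, hΩρP, hΩρy, hΩτ] at h2
    have e2 : ((ry : ℝ) : ℂ) - ((1 - ε : ℝ) : ℂ) * ((t : ℝ) : ℂ) - ((ε : ℝ) : ℂ) * ((qw : ℝ) : ℂ)
        = ((ry - (1 - ε) * t - ε * qw : ℝ) : ℂ) := by push_cast; ring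
    rw [e2, Complex.ofReal_re] at h2
    -- combine
    have eqw : 0 ≤ ε * qw := mul_nonneg hε0.le hqw0
    have ery : ε * ry ≤ ε * 1 := mul_le_mul_of_nonneg_left hry1 hε0.le
    have ert : ε * t ≤ ε * 1 := mul_le_mul_of_nonneg_left ht1 hε0.le
    have hs' : 0 < ε * s := mul_pos hε0 hs0
    rw [abs_le]
    constructor
    · nlinarith
    · nlinarith
  -- the quadratic form bound for the deviation matrix
  have hquad : ∀ x : Fin d → ℂ,
      |(star x ⬝ᵥ ((P * Ω * P - t • P) *ᵥ x)).re| ≤ (ε * (1 - s)) * (star x ⬝ᵥ x).re := by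
    intro x
    have hcge : 0 ≤ ε * (1 - s) := mul_nonneg hε0.le (by linarith)
    set y : Fin d → ℂ := P *ᵥ x with hy_def
    have hsy : star y = star x ᵥ* P := by rw [hy_def, Matrix.star_mulVec, hPe]
    have e2 : star y ⬝ᵥ y = star x ⬝ᵥ (P *ᵥ x) := by
      rw [hsy, ← Matrix.dotProduct_mulVec, hy_def, Matrix.mulVec_mulVec, hP2]
    have e1 : star y ⬝ᵥ (Ω *ᵥ y) = star x ⬝ᵥ ((P * Ω * P) *ᵥ x) := by
      rw [hsy, ← Matrix.dotProduct_mulVec, hy_def, Matrix.mulVec_mulVec,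
        Matrix.mulVec_mulVec, Matrix.mul_assoc]
    have hts : (t • P : Matrix (Fin d) (Fin d) ℂ) = ((t : ℝ) : ℂ) • P := by
      ext i j
      simp [Complex.real_smul]
    have hval : star x ⬝ᵥ ((P * Ω * P - t • P) *ᵥ x)
        = star y ⬝ᵥ (Ω *ᵥ y) - ((t : ℝ) : ℂ) * (star y ⬝ᵥ y) := by
      rw [Matrix.sub_mulVec, dotProduct_sub, e1, hts, Matrix.smul_mulVec,
        dotProduct_smul, smul_eq_mul, e2]
    by_cases hy0 : y = 0
    · have : star x ⬝ᵥ ((P * Ω * P - t • P) *ᵥ x) = 0 := by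
        rw [hval, hy0]
        simp
      rw [this]
      simp only [Complex.zero_re, abs_zero]
      exact mul_nonneg hcge (dot_star_self_re_nonneg x)
    · have hmy : 0 < (star y ⬝ᵥ y).re := dot_star_self_re_pos hy0
      have hkey := key y (by rw [hy_def, Matrix.mulVec_mulVec, hP2]) hy0
      have hre : (star x ⬝ᵥ ((P * Ω * P - t • P) *ᵥ x)).re
          = (star y ⬝ᵥ (Ω *ᵥ y)).re - t * (star y ⬝ᵥ y).re := by
        rw [hval, Complex.sub_re, Complex.re_ofReal_mul]
      have hfact : (star y ⬝ᵥ (Ω *ᵥ y)).re - t * (star y ⬝ᵥ y).re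
          = (star y ⬝ᵥ y).re * ((star y ⬝ᵥ (Ω *ᵥ y)).re / (star y ⬝ᵥ y).re - t) := by
        field_simp
      have hmyx : (star y ⬝ᵥ y).re ≤ (star x ⬝ᵥ x).re := by
        have h0 := hPm.re_dotProduct_nonneg x
        rw [RCLike.re_eq_complex_re, Matrix.sub_mulVec, Matrix.one_mulVec, dotProduct_sub,
          Complex.sub_re] at h0
        rw [e2]
        linarith
      rw [hre, hfact, abs_mul, abs_of_pos hmy]
      calc (star y ⬝ᵥ y).re * |(star y ⬝ᵥ (Ω *ᵥ y)).re / (star y ⬝ᵥ y).re - t|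
          ≤ (star y ⬝ᵥ y).re * (ε * (1 - s)) := by
            exact mul_le_mul_of_nonneg_left hkey hmy.le
        _ ≤ (ε * (1 - s)) * (star x ⬝ᵥ x).re := by
            rw [mul_comm]
            exact mul_le_mul_of_nonneg_left hmyx hcge
  -- Hermitian-ness of the deviation matrix
  have hΔH : (P * Ω * P - t • P).IsHermitian := by
    have hts : (t • P : Matrix (Fin d) (Fin d) ℂ) = ((t : ℝ) : ℂ) • P := by
      ext i j
      simp [Complex.real_smul]
    show (P * Ω * P - t • P)ᴴ = P * Ω * P - t • P
    rw [Matrix.conjTranspose_sub, hts, Matrix.conjTranspose_smul, Matrix.conjTranspose_mul,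
      Matrix.conjTranspose_mul, hPe, hΩp.1.eq, Matrix.mul_assoc, Complex.star_def,
      Complex.conj_ofReal]
  -- conclude
  have hbound : opNorm (P * Ω * P - t • P) ≤ ε * (1 - s) :=
    opNorm_le_of_quadratic _ hΔH _ (mul_nonneg hε0.le (by linarith)) hquad
  have hlt : ε * (1 - s) < ε / (1 - ε) := by
    have h1 : ε * (1 - s) < ε := by nlinarith
    have h2 : ε ≤ ε / (1 - ε) := by
      rw [le_div_iff₀ (by linarith : (0:ℝ) < 1 - ε)]
      nlinarith
    linarith
  linarith

end QSVQDH
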